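/- Let P, A ∈ (0,1) with P < A, let K ≥ 1 be an integer, δ ∈ (0,1), and let n ≥ 1 be an integer with Q_n = (⌊A·n⌋ + 1)/n < 1 (note A < Q_n). If n ≥ −log(1 − (1 − δ)^{1/K}) / D(A‖P), then the failure-probability upper bound satisfies 1 − (1 − exp(−n · D(Q_n‖P)))^K ≤ δ. In particular any committee size n exceeding −log(1 − (1 − δ)^{1/K}) / D(A‖P) guarantees failure probability at most δ. -/

import Mathlib

/-- Kullback–Leibler divergence between Bernoulli(q) and Bernoulli(p). -/
noncomputable def KL (q p : ℝ) : ℝ :=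
  q * Real.log (q / p) + (1 - q) * Real.log ((1 - q) / (1 - p))

lemma KL_self (p : ℝ) (h0 : 0 < p) (h1 : p < 1) : KL p p = 0 := by
  simp [KL, div_self h0.ne', div_self (by linarith : (1:ℝ) - p ≠ 0)]

lemma KL_strictMonoOn {P b : ℝ} (hP0 : 0 < P) (hb : b < 1) (hPb : P ≤ b) :
    StrictMonoOn (fun q => KL q P) (Set.Icc P b) := by
  set F : ℝ → ℝ := fun x =>
    (x * Real.log x - x * Real.log P) +
      ((1 - x) * Real.log (1 - x) - (1 - x) * Real.log (1 - P)) with hF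
  have hEq : Set.EqOn (fun q => KL q P) F (Set.Icc P b) := by
    intro x hx
    have hx0 : (0 : ℝ) < x := lt_of_lt_of_le hP0 hx.1
    have hx1 : x < 1 := lt_of_le_of_lt hx.2 hb
    simp only [KL, hF]
    rw [Real.log_div hx0.ne' hP0.ne',
      Real.log_div (by linarith : (1 : ℝ) - x ≠ 0) (by linarith : (1 : ℝ) - P ≠ 0)]
    ring
  have key : StrictMonoOn F (Set.Icc P b) := by
    have hderiv : ∀ x ∈ Set.Ioo P b, HasDerivAt F
        (Real.log x - Real.log P - Real.log (1 - x) + Real.log (1 - P)) x := by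
      intro x hx
      have hx0 : (0 : ℝ) < x := lt_trans hP0 hx.1
      have hx1 : x < 1 := lt_trans hx.2 hb
      have h1 : HasDerivAt (fun y : ℝ => y * Real.log y) (Real.log x + 1) x :=
        Real.hasDerivAt_mul_log hx0.ne'
      have h2 : HasDerivAt (fun y : ℝ => y * Real.log P) (Real.log P) x :=
        hasDerivAt_mul_const _
      have hu : HasDerivAt (fun y : ℝ => 1 - y) (-1) x := by
        simpa using (hasDerivAt_id x).const_sub (1:ℝ)
      have h3 : HasDerivAt (fun y : ℝ => (1 - y) * Real.log (1 - y))
          ((Real.log (1 - x) + 1) * (-1)) x :=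
        (Real.hasDerivAt_mul_log (by linarith : (1:ℝ) - x ≠ 0)).comp x hu
      have h4 : HasDerivAt (fun y : ℝ => (1 - y) * Real.log (1 - P))
          ((-1) * Real.log (1 - P)) x := hu.mul_const _
      have := ((h1.sub h2).add (h3.sub h4))
      exact this.congr_deriv (by ring)
    apply strictMonoOn_of_deriv_pos (convex_Icc P b)
    · -- continuity
      apply ContinuousOn.add
      · apply ContinuousOn.sub
        · exact (continuousOn_id.mul (Real.continuousOn_log.mono (by
            intro x hx; simp only [Set.mem_compl_iff, Set.mem_singleton_iff]
            exact (lt_of_lt_of_le hP0 hx.1).ne')))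
        · exact continuousOn_id.mul continuousOn_const
      · apply ContinuousOn.sub
        · exact ((continuousOn_const.sub continuousOn_id).mul
            ((Real.continuousOn_log.comp (continuousOn_const.sub continuousOn_id) (by
              intro x hx; simp only [Set.mem_compl_iff, Set.mem_singleton_iff]
              have : x < 1 := lt_of_le_of_lt hx.2 hb
              intro hc; linarith))))
        · exact (continuousOn_const.sub continuousOn_id).mul continuousOn_const
    · intro x hx
      rw [interior_Icc] at hx
      rw [(hderiv x hx).deriv]
      obtain ⟨hxl, hxr⟩ := hx
      have hx0 : (0 : ℝ) < x := lt_trans hP0 hxl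
      have hx1 : x < 1 := lt_trans hxr hb
      have l1 : Real.log P < Real.log x := Real.log_lt_log hP0 hxl
      have l2 : Real.log (1 - x) < Real.log (1 - P) :=
        Real.log_lt_log (by linarith) (by linarith)
      linarith
  intro x hx y hy hxy
  rw [hEq hx, hEq hy]
  exact key hx hy hxy

theorem stmt_13 (P A : ℝ) (hP : P ∈ Set.Ioo (0 : ℝ) 1) (hA : A ∈ Set.Ioo (0 : ℝ) 1)
    (hPA : P < A) (K : ℕ) (hK : 1 ≤ K) (δ : ℝ) (hδ : δ ∈ Set.Ioo (0 : ℝ) 1)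
    (n : ℕ) (hn : 1 ≤ n)
    (Qn : ℝ) (hQn : Qn = ((Nat.floor (A * n) : ℝ) + 1) / (n : ℝ)) (hQn1 : Qn < 1)
    (h : -Real.log (1 - (1 - δ) ^ ((1 : ℝ) / K)) / KL A P ≤ (n : ℝ)) :
    1 - (1 - Real.exp (-(n : ℝ) * KL Qn P)) ^ K ≤ δ := by
  obtain ⟨hP0, hP1⟩ := hP
  obtain ⟨hA0, hA1⟩ := hA
  obtain ⟨hδ0, hδ1⟩ := hδ
  have hn0 : (0 : ℝ) < n := by exact_mod_cast hn
  have hAQ : A < Qn := by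
    rw [hQn, lt_div_iff₀ hn0]
    have := Nat.lt_floor_add_one (A * n)
    linarith
  have hmono := KL_strictMonoOn hP0 hQn1 (le_of_lt (lt_trans hPA hAQ))
  have hKLpos : 0 < KL A P := by
    have := hmono (Set.left_mem_Icc.2 (le_of_lt (lt_trans hPA hAQ)))
      ⟨hPA.le, hAQ.le⟩ hPA
    simpa [KL_self P hP0 hP1] using this
  have hKLle : KL A P ≤ KL Qn P :=
    (hmono ⟨hPA.le, hAQ.le⟩ (Set.right_mem_Icc.2 (le_of_lt (lt_trans hPA hAQ))) hAQ).le
  -- t := 1 - (1-δ)^{1/K}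
  set t : ℝ := 1 - (1 - δ) ^ ((1 : ℝ) / K) with ht
  have hKpos : (0 : ℝ) < (K : ℝ) := by exact_mod_cast hK
  have hr0 : (0 : ℝ) < (1 - δ) ^ ((1 : ℝ) / K) :=
    Real.rpow_pos_of_pos (by linarith) _
  have hr1 : (1 - δ) ^ ((1 : ℝ) / K) < 1 :=
    Real.rpow_lt_one (by linarith) (by linarith) (by positivity)
  have ht0 : 0 < t := by rw [ht]; linarith
  have ht1 : t < 1 := by rw [ht]; linarith
  have hnKL : -Real.log t ≤ (n : ℝ) * KL A P := by
    rw [div_le_iff₀ hKLpos] at h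
    linarith [h]
  have hnKL2 : -Real.log t ≤ (n : ℝ) * KL Qn P := by
    have : (n : ℝ) * KL A P ≤ (n : ℝ) * KL Qn P :=
      mul_le_mul_of_nonneg_left hKLle hn0.le
    linarith
  have hexp : Real.exp (-(n : ℝ) * KL Qn P) ≤ t := by
    rw [← Real.exp_log ht0]
    exact Real.exp_le_exp.2 (by linarith)
  have hbase : (1 - δ) ^ ((1 : ℝ) / K) ≤ 1 - Real.exp (-(n : ℝ) * KL Qn P) := by
    simp only [ht] at hexp; linarith
  have hpow : ((1 - δ) ^ ((1 : ℝ) / K)) ^ K ≤ (1 - Real.exp (-(n : ℝ) * KL Qn P)) ^ K :=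
    pow_le_pow_left₀ hr0.le hbase K
  have hid : ((1 - δ) ^ ((1 : ℝ) / K)) ^ K = 1 - δ := by
    rw [← Real.rpow_natCast ((1 - δ) ^ ((1 : ℝ) / K)) K,
      ← Real.rpow_mul (by linarith), one_div,
      inv_mul_cancel₀ (ne_of_gt hKpos), Real.rpow_one]
  rw [hid] at hpow
  linarith
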